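/- Let D be a rectilinear drawing of a finite simple graph G and let w be a vertex of G. Then there exists ε > 0 such that for every point p at distance less than ε from the point representing w in D, if moving w to p keeps the vertex points in general position, the resulting rectilinear drawing D' of G has exactly the same set of crossing pairs of edges as D (a pair of edges crosses in D' if and only if it crosses in D). -/

import Mathlib

/-! ## Basic geometric notions -/

/-- The closed straight-line segment determined by an unordered pair of points of the plane. -/
def segOf : Sym2 (ℝ × ℝ) → Set (ℝ × ℝ) :=
  Sym2.lift ⟨fun a b => segment ℝ a b, fun a b => segment_symm ℝ a b⟩

/-- A set `S` of points of the plane is in *general position* if no three of its points are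
collinear and no three distinct segments between pairs of its points have a common point,
unless all three segments share a common endpoint. -/
def GenPos (S : Set (ℝ × ℝ)) : Prop :=
  (∀ a ∈ S, ∀ b ∈ S, ∀ c ∈ S, a ≠ b → a ≠ c → b ≠ c →
      ¬ Collinear ℝ ({a, b, c} : Set (ℝ × ℝ))) ∧
  (∀ s₁ s₂ s₃ : Sym2 (ℝ × ℝ),
      (∀ x ∈ s₁, x ∈ S) → (∀ x ∈ s₂, x ∈ S) → (∀ x ∈ s₃, x ∈ S) →
      s₁ ≠ s₂ → s₁ ≠ s₃ → s₂ ≠ s₃ →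
      ∀ q, q ∈ segOf s₁ → q ∈ segOf s₂ → q ∈ segOf s₃ →
        ∃ z, z ∈ s₁ ∧ z ∈ s₂ ∧ z ∈ s₃)

/-! ## Multigraphs and their rectilinear drawings -/

/-- A multigraph: parallel edges allowed, no loops.  `E` indexes the edges. -/
structure Multigraph (V E : Type) where
  ends : E → Sym2 V
  not_isDiag : ∀ e, ¬ (ends e).IsDiag

namespace Multigraph

variable {V E : Type}

/-- A rectilinear drawing of a multigraph: an injective placement of the vertices at points
of the plane in general position; each edge is represented by the closed segment between
the points of its endpoints. -/
def IsRectDrawing (_K : Multigraph V E) (p : V → ℝ × ℝ) : Prop :=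
  Function.Injective p ∧ GenPos (Set.range p)

/-- Two edges form a *crossing pair* in a drawing if they have no common endpoint and their
segments have a common point. -/
def CrossingPair (K : Multigraph V E) (p : V → ℝ × ℝ) (e f : E) : Prop :=
  (∀ v : V, ¬ (v ∈ K.ends e ∧ v ∈ K.ends f)) ∧
  (segOf ((K.ends e).map p) ∩ segOf ((K.ends f).map p)).Nonempty

/-- The number of crossings of a rectilinear drawing: the number of unordered crossing
pairs of edges. -/
noncomputable def crossCount (K : Multigraph V E) (p : V → ℝ × ℝ) : ℕ :=
  Nat.card {s : Sym2 E // ∃ e f : E, s = s(e, f) ∧ K.CrossingPair p e f}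

/-- The rectilinear crossing number of a multigraph. -/
noncomputable def rcr (K : Multigraph V E) : ℕ :=
  sInf {n | ∃ p : V → ℝ × ℝ, K.IsRectDrawing p ∧ K.crossCount p = n}

/-- The degree of a vertex: the number of edges incident to it. -/
noncomputable def deg (K : Multigraph V E) (v : V) : ℕ := Nat.card {e : E // v ∈ K.ends e}

/-- The maximum degree `Δ`. -/
noncomputable def maxDeg (K : Multigraph V E) : ℕ := sSup (Set.range K.deg)

/-- The number of edges (counted with multiplicity). -/
noncomputable def edgeCount (_K : Multigraph V E) : ℕ := Nat.card E

/-- The underlying simple graph of a multigraph. -/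
def toSimple (K : Multigraph V E) : SimpleGraph V where
  Adj u v := u ≠ v ∧ ∃ e, K.ends e = s(u, v)
  symm := ⟨by
    rintro u v ⟨huv, e, he⟩
    exact ⟨huv.symm, e, he.trans (Sym2.eq_swap)⟩⟩
  loopless := ⟨fun v h => h.1 rfl⟩

end Multigraph

/-! ## Simple graphs: rectilinear drawings, degree, edges -/

/-- The multigraph associated with a simple graph (edges indexed by the edge set). -/
def SimpleGraph.toMulti {V : Type} (G : SimpleGraph V) : Multigraph V G.edgeSet where
  ends := Subtype.val
  not_isDiag := fun e => G.not_isDiag_of_mem_edgeSet e.2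

/-- The rectilinear crossing number of a simple graph. -/
noncomputable def SimpleGraph.rcr {V : Type} (G : SimpleGraph V) : ℕ := G.toMulti.rcr

/-- The maximum degree `Δ(G)` of a simple graph. -/
noncomputable def SimpleGraph.maxDeg {V : Type} (G : SimpleGraph V) : ℕ := G.toMulti.maxDeg

/-- The number `‖G‖` of edges of a simple graph. -/
noncomputable def SimpleGraph.edgeCount {V : Type} (G : SimpleGraph V) : ℕ :=
  Nat.card G.edgeSet

/-! ## Topological drawings, crossing number, planarity -/

/-- `A` is the image of a simple arc from `x` to `y`. -/
def IsArc (A : Set (ℝ × ℝ)) (x y : ℝ × ℝ) : Prop :=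
  ∃ γ : Path x y, Function.Injective γ ∧ Set.range γ = A

/-- A drawing of a simple graph in the plane: vertices are distinct points, each edge is a
simple arc between the points of its endpoints, no edge passes through a vertex other than
its own endpoints, two distinct edges meet in finitely many points, and no three edges have
a common point except at a common endpoint. -/
def SimpleGraph.IsTopDrawing {V : Type} (G : SimpleGraph V) (p : V → ℝ × ℝ)
    (A : Sym2 V → Set (ℝ × ℝ)) : Prop :=
  Function.Injective p ∧
  (∀ a b : V, G.Adj a b → IsArc (A s(a, b)) (p a) (p b)) ∧
  (∀ e ∈ G.edgeSet, ∀ v : V, p v ∈ A e → v ∈ e) ∧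
  (∀ e ∈ G.edgeSet, ∀ f ∈ G.edgeSet, e ≠ f → (A e ∩ A f).Finite) ∧
  (∀ e ∈ G.edgeSet, ∀ f ∈ G.edgeSet, ∀ g ∈ G.edgeSet, e ≠ f → e ≠ g → f ≠ g →
    ∀ q : ℝ × ℝ, q ∈ A e → q ∈ A f → q ∈ A g →
      ∃ v : V, v ∈ e ∧ v ∈ f ∧ v ∈ g ∧ p v = q)

/-- The number of crossings of a topological drawing: pairs (pair of edges, point) where the
point lies on both edges and is not the image of a common endpoint. -/
noncomputable def SimpleGraph.topCrossCount {V : Type} (G : SimpleGraph V) (p : V → ℝ × ℝ)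
    (A : Sym2 V → Set (ℝ × ℝ)) : ℕ :=
  Nat.card {x : Sym2 (Sym2 V) × (ℝ × ℝ) //
    ∃ e f : Sym2 V, x.1 = s(e, f) ∧ e ≠ f ∧ e ∈ G.edgeSet ∧ f ∈ G.edgeSet ∧
      x.2 ∈ A e ∧ x.2 ∈ A f ∧ ¬ ∃ v : V, v ∈ e ∧ v ∈ f ∧ p v = x.2}

/-- The crossing number of a simple graph. -/
noncomputable def SimpleGraph.cr {V : Type} (G : SimpleGraph V) : ℕ :=
  sInf {n | ∃ p A, G.IsTopDrawing p A ∧ G.topCrossCount p A = n}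

/-- A graph is planar if it has a crossing-free drawing in the plane. -/
def SimpleGraph.IsPlanarDrawable {V : Type} (G : SimpleGraph V) : Prop :=
  ∃ p A, G.IsTopDrawing p A ∧ G.topCrossCount p A = 0

/-! ## Minors -/

/-- `X.IsMinorOf G`: `X` can be obtained from a subgraph of `G` by contracting edges;
witnessed by disjoint nonempty connected branch sets, one for each vertex of `X`, with an
edge of `G` between the branch sets of any two adjacent vertices of `X`. -/
def SimpleGraph.IsMinorOf {W V : Type} (X : SimpleGraph W) (G : SimpleGraph V) : Prop :=
  ∃ φ : V → Option W,
    (∀ w : W, (φ ⁻¹' {some w}).Nonempty) ∧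
    (∀ w : W, (G.induce (φ ⁻¹' {some w})).Connected) ∧
    (∀ w₁ w₂ : W, X.Adj w₁ w₂ → ∃ a b : V, φ a = some w₁ ∧ φ b = some w₂ ∧ G.Adj a b)

/-! ## Tree decompositions and treewidth -/

/-- `G` has a tree decomposition of width at most `k`. -/
def SimpleGraph.HasTreewidthAtMost {V : Type} (G : SimpleGraph V) (k : ℕ) : Prop :=
  ∃ (ι : Type) (T : SimpleGraph ι) (B : ι → Set V),
    T.IsTree ∧
    (∀ u v : V, G.Adj u v → ∃ x, u ∈ B x ∧ v ∈ B x) ∧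
    (∀ v : V, {x | v ∈ B x}.Nonempty) ∧
    (∀ v : V, (T.induce {x | v ∈ B x}).Connected) ∧
    (∀ x, (B x).Finite ∧ (B x).ncard ≤ k + 1)

/-! ## Clique-sums -/

/-- `IsCliqueSumOf k G A B`: the graph `G` is obtained by an `l`-clique-sum of the disjoint
graphs `A` and `B` for some `1 ≤ l ≤ k`: cliques of size `l` of `A` and `B` are identified
via a bijection, and some edges of the resulting clique are possibly deleted. -/
def IsCliqueSumOf (k : ℕ) {V V₁ V₂ : Type} (G : SimpleGraph V)
    (A : SimpleGraph V₁) (B : SimpleGraph V₂) : Prop :=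
  ∃ (i : V₁ → V) (j : V₂ → V) (S : Set V₁) (T : Set V₂),
    Function.Injective i ∧ Function.Injective j ∧
    Set.range i ∪ Set.range j = Set.univ ∧
    A.IsClique S ∧ B.IsClique T ∧
    S.Nonempty ∧ S.Finite ∧ S.ncard ≤ k ∧
    i '' S = Set.range i ∩ Set.range j ∧
    j '' T = Set.range i ∩ Set.range j ∧
    (∀ a a', A.Adj a a' → G.Adj (i a) (i a') ∨ (a ∈ S ∧ a' ∈ S)) ∧
    (∀ b b', B.Adj b b' → G.Adj (j b) (j b') ∨ (b ∈ T ∧ b' ∈ T)) ∧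
    (∀ x y, G.Adj x y →
      (∃ a a', A.Adj a a' ∧ i a = x ∧ i a' = y) ∨
      (∃ b b', B.Adj b b' ∧ j b = x ∧ j b' = y))

/-- `CliqueSumGen k P G`: `G` can be obtained by iterated `(≤ k)`-clique-sums of pieces each
of which satisfies the property `P`. -/
inductive CliqueSumGen (k : ℕ) (P : ∀ {W : Type}, SimpleGraph W → Prop) :
    ∀ {V : Type}, SimpleGraph V → Prop
  | base {V : Type} (G : SimpleGraph V) : P G → CliqueSumGen k P G
  | sum {V V₁ V₂ : Type} (G : SimpleGraph V) (G₁ : SimpleGraph V₁) (G₂ : SimpleGraph V₂) :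
      CliqueSumGen k P G₁ → P G₂ → IsCliqueSumOf k G G₁ G₂ → CliqueSumGen k P G

/-! ## Simplicial blowups and agreeability -/

/-- `IsSimplicialBlowup k G Q`: the multigraph `Q` is a `(≤ k)`-simplicial blowup of the
simple graph `G`: it is obtained from `G` by adding an independent set of new vertices, each
adjacent to all vertices of some clique of size at most `k` of `G` (possibly with parallel
edges), and finally deleting zero or more edges from the cliques involved. -/
def IsSimplicialBlowup (k : ℕ) {V W F : Type} (G : SimpleGraph V) (Q : Multigraph W F) :
    Prop :=
  ∃ (ι : V → W) (C : W → Set V),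
    Function.Injective ι ∧
    (∀ u : W, u ∉ Set.range ι → G.IsClique (C u) ∧ (C u).Finite ∧ (C u).ncard ≤ k) ∧
    (∀ u : W, u ∉ Set.range ι → ∀ a ∈ C u, ∃ e : F, Q.ends e = s(u, ι a)) ∧
    (∀ e : F, (∃ a b : V, G.Adj a b ∧ Q.ends e = s(ι a, ι b)) ∨
      (∃ (u : W) (a : V), u ∉ Set.range ι ∧ a ∈ C u ∧ Q.ends e = s(u, ι a))) ∧
    (∀ e f : F, ∀ a b : V, Q.ends e = s(ι a, ι b) → Q.ends f = s(ι a, ι b) → e = f) ∧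
    (∀ a b : V, G.Adj a b →
      (∃ e : F, Q.ends e = s(ι a, ι b)) ∨ ∃ u : W, u ∉ Set.range ι ∧ a ∈ C u ∧ b ∈ C u)

/-- A graph `R` is `(k, c)`-agreeable if for every induced subgraph `R'` of `R` and every
(finite) `(≤ k)`-simplicial blowup `R*` of `R'`, `rcr(R*) ≤ c · Δ(R*) · ‖R*‖`. -/
def Agreeable (k : ℕ) (c : ℝ) {V : Type} (G : SimpleGraph V) : Prop :=
  ∀ (s : Set V) (W F : Type), Finite W → Finite F → ∀ Q : Multigraph W F,
    IsSimplicialBlowup k (G.induce s) Q →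
    (Q.rcr : ℝ) ≤ c * Q.maxDeg * Q.edgeCount

/-! ## H-partitions -/

/-- An `H`-partition of a multigraph `K`: the vertices of the simple graph `H` index
nonempty bags partitioning `V(K)`, and whenever an edge of `K` has endpoints in two distinct
bags, the corresponding vertices of `H` are adjacent. -/
def IsHPartition {V E ι : Type} (K : Multigraph V E) (H : SimpleGraph ι) (B : ι → Set V) :
    Prop :=
  (∀ x : ι, (B x).Nonempty) ∧
  (∀ v : V, ∃! x : ι, v ∈ B x) ∧
  (∀ e : E, ∀ u ∈ K.ends e, ∀ v ∈ K.ends e, ∀ x y : ι,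
    u ∈ B x → v ∈ B y → x ≠ y → H.Adj x y)

/-- A separating triangle of `G`: a triangle whose removal disconnects `G`. -/
def HasSepTriangle {V : Type} (G : SimpleGraph V) : Prop :=
  ∃ a b c : V, G.Adj a b ∧ G.Adj a c ∧ G.Adj b c ∧
    ∃ u v : (({a, b, c} : Set V)ᶜ : Set V),
      ¬ (G.induce (({a, b, c} : Set V)ᶜ)).Reachable u v


namespace CrossStable

def det2 (u v : ℝ × ℝ) : ℝ := u.1 * v.2 - u.2 * v.1

def ori (a b c : ℝ × ℝ) : ℝ := det2 (b - a) (c - a)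

lemma exists_smul_of_det2 {u v : ℝ × ℝ} (hu : u ≠ 0) (h : det2 u v = 0) :
    ∃ r : ℝ, v = r • u := by
  simp only [det2] at h
  by_cases h1 : u.1 = 0
  · have h2 : u.2 ≠ 0 := fun h2 => hu (Prod.ext h1 h2)
    have hv1 : v.1 = 0 := by
      have : u.2 * v.1 = 0 := by rw [h1] at h; linarith
      exact (mul_eq_zero.mp this).resolve_left h2
    refine ⟨v.2 / u.2, Prod.ext ?_ ?_⟩
    · simp only [Prod.smul_fst, smul_eq_mul, h1, mul_zero, hv1]
    · simp only [Prod.smul_snd, smul_eq_mul]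
      field_simp
  · refine ⟨v.1 / u.1, Prod.ext ?_ ?_⟩
    · simp only [Prod.smul_fst, smul_eq_mul]
      field_simp
    · simp only [Prod.smul_snd, smul_eq_mul]
      field_simp
      linarith

lemma collinear_of_ori {a b c : ℝ × ℝ} (h : ori a b c = 0) :
    Collinear ℝ ({a, b, c} : Set (ℝ × ℝ)) := by
  by_cases hab : b = a
  · subst hab
    have : ({b, b, c} : Set (ℝ × ℝ)) = {b, c} := by simp [Set.insert_comm]
    rw [this]
    exact collinear_pair ℝ b c
  · have hu : b - a ≠ 0 := sub_ne_zero.mpr hab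
    obtain ⟨r, hr⟩ := exists_smul_of_det2 hu h
    rw [collinear_iff_of_mem (Set.mem_insert a _)]
    refine ⟨b - a, ?_⟩
    rintro x (rfl | rfl | rfl)
    · exact ⟨0, by simp⟩
    · exact ⟨1, by simp⟩
    · exact ⟨r, by rw [← hr]; simp⟩

lemma ori_affine (c d a b : ℝ × ℝ) {u v : ℝ} (huv : u + v = 1) :
    ori c d (u • a + v • b) = u * ori c d a + v * ori c d b := by
  have hv : v = 1 - u := by linarith
  subst hv
  simp only [ori, det2, Prod.fst_sub, Prod.snd_sub, Prod.fst_add, Prod.snd_add,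
    Prod.smul_fst, Prod.smul_snd, smul_eq_mul]
  ring

lemma ori_self_left (c d : ℝ × ℝ) : ori c d c = 0 := by
  simp [ori, det2]

lemma ori_self_right (c d : ℝ × ℝ) : ori c d d = 0 := by
  simp only [ori, det2, Prod.fst_sub, Prod.snd_sub]; ring

lemma ori_neg_of_mem_segments {a b c d q : ℝ × ℝ}
    (hq1 : q ∈ segment ℝ a b) (hq2 : q ∈ segment ℝ c d)
    (ha : ori c d a ≠ 0) (hb : ori c d b ≠ 0) :
    ori c d a * ori c d b < 0 := by
  obtain ⟨u, v, hu, hv, huv, hq⟩ := hq1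
  obtain ⟨u', v', hu', hv', huv', hq'⟩ := hq2
  have h0 : ori c d q = 0 := by
    rw [← hq', ori_affine c d _ _ huv', ori_self_left, ori_self_right]; ring
  rw [← hq, ori_affine c d _ _ huv] at h0
  -- u * oa + v * ob = 0, u,v ≥ 0, u+v = 1, oa ob ≠ 0
  have hupos : 0 < u := by
    rcases lt_or_eq_of_le hu with h | h
    · exact h
    · exfalso; apply hb; have : v = 1 := by linarith
      rw [← h, this] at h0; linarith
  have hvpos : 0 < v := by
    rcases lt_or_eq_of_le hv with h | h
    · exact h
    · exfalso; apply ha; have : u = 1 := by linarith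
      rw [← h, this] at h0; linarith
  have hne : v * ori c d b ≠ 0 := mul_ne_zero (ne_of_gt hvpos) hb
  have hkey : u * v * (ori c d a * ori c d b) = -((v * ori c d b) * (v * ori c d b)) := by
    linear_combination (v * ori c d b) * h0
  nlinarith [mul_pos hupos hvpos, mul_self_pos.mpr hne]

lemma det2_unique {u v z : ℝ × ℝ} (h : det2 u v ≠ 0)
    (h1 : det2 u z = 0) (h2 : det2 v z = 0) : z = 0 := by
  simp only [det2] at h h1 h2
  refine Prod.ext ?_ ?_
  · have : z.1 * (u.1 * v.2 - u.2 * v.1) = 0 := by linear_combination (-u.1) * h2 + v.1 * h1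
    simpa [h] using mul_eq_zero.mp this
  · have : z.2 * (u.1 * v.2 - u.2 * v.1) = 0 := by linear_combination (-u.2) * h2 + v.2 * h1
    simpa [h] using mul_eq_zero.mp this

lemma cross_of_ori {a b c d : ℝ × ℝ}
    (h1 : ori c d a * ori c d b < 0) (h2 : ori a b c * ori a b d < 0) :
    (segment ℝ a b ∩ segment ℝ c d).Nonempty := by
  set oa := ori c d a with hoa
  set ob := ori c d b with hob
  set oc := ori a b c with hoc
  set od := ori a b d with hod
  have hab : oa - ob ≠ 0 := by
    intro h
    rw [sub_eq_zero] at h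
    rw [← h] at h1
    nlinarith [mul_self_nonneg oa]
  have hcd : oc - od ≠ 0 := by
    intro h
    rw [sub_eq_zero] at h
    rw [← h] at h2
    nlinarith [mul_self_nonneg oc]
  set t : ℝ := oa / (oa - ob) with htdef
  set s : ℝ := oc / (oc - od) with hsdef
  have ht : t * (oa - ob) = oa := div_mul_cancel₀ _ hab
  have hs : s * (oc - od) = oc := div_mul_cancel₀ _ hcd
  have ht0 : 0 ≤ t := by
    rcases mul_neg_iff.mp h1 with ⟨h1a, h1b⟩ | ⟨h1a, h1b⟩
    · exact div_nonneg h1a.le (by linarith)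
    · exact le_of_lt (div_pos_of_neg_of_neg h1a (by linarith))
  have ht1 : t ≤ 1 := by
    rcases mul_neg_iff.mp h1 with ⟨h1a, h1b⟩ | ⟨h1a, h1b⟩
    · rw [div_le_one (by linarith)]; linarith
    · rw [div_le_one_iff]; exact Or.inr (Or.inr ⟨by linarith, by linarith⟩)
  have hs0 : 0 ≤ s := by
    rcases mul_neg_iff.mp h2 with ⟨h2a, h2b⟩ | ⟨h2a, h2b⟩
    · exact div_nonneg h2a.le (by linarith)
    · exact le_of_lt (div_pos_of_neg_of_neg h2a (by linarith))
  have hs1 : s ≤ 1 := by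
    rcases mul_neg_iff.mp h2 with ⟨h2a, h2b⟩ | ⟨h2a, h2b⟩
    · rw [div_le_one (by linarith)]; linarith
    · rw [div_le_one_iff]; exact Or.inr (Or.inr ⟨by linarith, by linarith⟩)
  set x : ℝ × ℝ := a + t • (b - a) with hxdef
  set y : ℝ × ℝ := c + s • (d - c) with hydef
  have hD : det2 (b - a) (d - c) = od - oc := by
    simp only [hod, hoc, ori, det2, Prod.fst_sub, Prod.snd_sub]; ring
  have hkey1 : det2 (b - a) (x - y) = 0 := by
    have expand : det2 (b - a) (x - y) = -oc - s * (od - oc) := by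
      simp only [hxdef, hydef, hoc, hod, ori, det2, Prod.fst_sub, Prod.snd_sub,
        Prod.fst_add, Prod.snd_add, Prod.smul_fst, Prod.smul_snd, smul_eq_mul]
      ring
    rw [expand]; linear_combination hs
  have hkey2 : det2 (d - c) (x - y) = 0 := by
    have expand : det2 (d - c) (x - y) = oa + t * (ob - oa) := by
      simp only [hxdef, hydef, hoa, hob, ori, det2, Prod.fst_sub, Prod.snd_sub,
        Prod.fst_add, Prod.snd_add, Prod.smul_fst, Prod.smul_snd, smul_eq_mul]
      ring
    rw [expand]; linear_combination -ht
  have hxy : x = y := by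
    have hDne : det2 (b - a) (d - c) ≠ 0 := by rw [hD]; intro h; apply hcd; linarith
    have h := det2_unique hDne hkey1 hkey2
    exact sub_eq_zero.mp h
  refine ⟨x, ?_, ?_⟩
  · exact ⟨1 - t, t, by linarith, ht0, by ring, by rw [hxdef]; module⟩
  · rw [hxy]
    exact ⟨1 - s, s, by linarith, hs0, by ring, by rw [hydef]; module⟩


lemma segment_subset_thickening {δ : ℝ} (hδ : 0 < δ) {x x' y y' : ℝ × ℝ}
    (hx : dist x' x < δ) (hy : dist y' y < δ) :
    segment ℝ x' y' ⊆ Metric.thickening δ (segment ℝ x y) := by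
  rintro z ⟨u, v, hu, hv, huv, rfl⟩
  rw [Metric.mem_thickening_iff]
  refine ⟨u • x + v • y, ⟨u, v, hu, hv, huv, rfl⟩, ?_⟩
  have h1 : dist (u • x' + v • y') (u • x + v • y) ≤ u * dist x' x + v * dist y' y := by
    calc dist (u • x' + v • y') (u • x + v • y)
        ≤ dist (u • x') (u • x) + dist (v • y') (v • y) := dist_add_add_le _ _ _ _
      _ = u * dist x' x + v * dist y' y := by
          rw [dist_smul₀, dist_smul₀, Real.norm_of_nonneg hu, Real.norm_of_nonneg hv]
  refine lt_of_le_of_lt h1 ?_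
  by_cases hu0 : u = 0
  · have hv1 : v = 1 := by linarith
    simpa [hu0, hv1] using hy
  · have hupos : 0 < u := lt_of_le_of_ne hu (Ne.symm hu0)
    nlinarith [mul_pos hupos (sub_pos.mpr hx), mul_nonneg hv (sub_nonneg.mpr hy.le),
      dist_nonneg (x := x') (y := x), dist_nonneg (x := y') (y := y)]

lemma cont_ori {α : Type*} [TopologicalSpace α] {f g h : α → ℝ × ℝ}
    (hf : Continuous f) (hg : Continuous g) (hh : Continuous h) :
    Continuous fun x => ori (f x) (g x) (h x) := by
  unfold ori det2
  fun_prop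

lemma isCompact_seg (x y : ℝ × ℝ) : IsCompact (segment ℝ x y) := by
  rw [segment_eq_image]
  exact isCompact_Icc.image (by fun_prop)

lemma cont_update {V : Type} [DecidableEq V] (p : V → ℝ × ℝ) (w v : V) :
    Continuous fun q : ℝ × ℝ => Function.update p w q v := by
  by_cases hv : v = w
  · subst hv
    have : (fun q : ℝ × ℝ => Function.update p v q v) = id := by
      funext q; simp
    rw [this]; exact continuous_id
  · have : (fun q : ℝ × ℝ => Function.update p w q v) = fun _ => p v := by
      funext q; rw [Function.update_of_ne hv]
    rw [this]; exact continuous_const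

end CrossStable

open CrossStable in
/-- For any rectilinear drawing `p` of a finite simple graph `G` and any
vertex `w`, there is `ε > 0` such that moving `w` to any point at distance less than `ε`
that keeps the vertex points in general position yields a rectilinear drawing with exactly
the same crossing pairs of edges. -/
theorem crossingPairs_stable_under_small_vertex_move {V : Type} [Fintype V] [DecidableEq V]
    (G : SimpleGraph V) (p : V → ℝ × ℝ) (hD : G.toMulti.IsRectDrawing p) (w : V) :
    ∃ ε : ℝ, 0 < ε ∧ ∀ q : ℝ × ℝ, dist q (p w) < ε →
      G.toMulti.IsRectDrawing (Function.update p w q) →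
      ∀ e f : G.edgeSet,
        (G.toMulti.CrossingPair (Function.update p w q) e f ↔
          G.toMulti.CrossingPair p e f) := by
  obtain ⟨hinj, hgen⟩ := hD
  have horine : ∀ x y z : V, x ≠ y → x ≠ z → y ≠ z → ori (p x) (p y) (p z) ≠ 0 := by
    intro x y z hxy hxz hyz h
    exact hgen.1 (p x) ⟨x, rfl⟩ (p y) ⟨y, rfl⟩ (p z) ⟨z, rfl⟩
      (fun hh => hxy (hinj hh)) (fun hh => hxz (hinj hh)) (fun hh => hyz (hinj hh))
      (collinear_of_ori h)
  have hud : ∀ (q : ℝ × ℝ) (v : V), dist (Function.update p w q v) (p v) ≤ dist q (p w) := by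
    intro q v
    by_cases hv : v = w
    · subst hv; rw [Function.update_self]
    · rw [Function.update_of_ne hv]
      simpa using dist_nonneg
  have main : ∀ e f : G.edgeSet, ∃ δ : ℝ, 0 < δ ∧ ∀ q : ℝ × ℝ, dist q (p w) < δ →
      (G.toMulti.CrossingPair (Function.update p w q) e f ↔ G.toMulti.CrossingPair p e f) := by
    intro e f
    obtain ⟨e, he⟩ := e
    obtain ⟨f, hf⟩ := f
    revert he hf
    induction e using Sym2.ind with | _ a b => ?_
    induction f using Sym2.ind with | _ c d => ?_
    intro he hf
    have hCP : ∀ p' : V → ℝ × ℝ,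
        G.toMulti.CrossingPair p' ⟨s(a, b), he⟩ ⟨s(c, d), hf⟩ ↔
        ((∀ v : V, ¬(v ∈ s(a, b) ∧ v ∈ s(c, d))) ∧
          (segment ℝ (p' a) (p' b) ∩ segment ℝ (p' c) (p' d)).Nonempty) := by
      intro p'
      simp only [Multigraph.CrossingPair, SimpleGraph.toMulti, Sym2.map_pair_eq]
      rfl
    by_cases hcomm : ∃ v : V, v ∈ s(a, b) ∧ v ∈ s(c, d)
    · obtain ⟨v, hv⟩ := hcomm
      refine ⟨1, one_pos, fun q _ => ?_⟩
      rw [hCP, hCP]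
      constructor <;> (rintro ⟨h1, -⟩; exact (h1 v hv).elim)
    · push_neg at hcomm
      have hab : a ≠ b := (G.mem_edgeSet.mp he).ne
      have hcd : c ≠ d := (G.mem_edgeSet.mp hf).ne
      have hac : a ≠ c := fun h => hcomm a (by simp) (by simp [h])
      have had : a ≠ d := fun h => hcomm a (by simp) (by simp [h])
      have hbc : b ≠ c := fun h => hcomm b (by simp) (by simp [h])
      have hbd : b ≠ d := fun h => hcomm b (by simp) (by simp [h])
      by_cases hcr : (segment ℝ (p a) (p b) ∩ segment ℝ (p c) (p d)).Nonempty
      · obtain ⟨q0, hq0ab, hq0cd⟩ := hcr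
        have o1 : ori (p c) (p d) (p a) ≠ 0 := horine c d a hcd hac.symm had.symm
        have o2 : ori (p c) (p d) (p b) ≠ 0 := horine c d b hcd hbc.symm hbd.symm
        have o3 : ori (p a) (p b) (p c) ≠ 0 := horine a b c hab hac hbc
        have o4 : ori (p a) (p b) (p d) ≠ 0 := horine a b d hab had hbd
        have H1 : ori (p c) (p d) (p a) * ori (p c) (p d) (p b) < 0 :=
          ori_neg_of_mem_segments hq0ab hq0cd o1 o2
        have H2 : ori (p a) (p b) (p c) * ori (p a) (p b) (p d) < 0 :=
          ori_neg_of_mem_segments hq0cd hq0ab o3 o4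
        set F1 : ℝ × ℝ → ℝ := fun q =>
          ori (Function.update p w q c) (Function.update p w q d) (Function.update p w q a) *
          ori (Function.update p w q c) (Function.update p w q d) (Function.update p w q b)
          with hF1def
        set F2 : ℝ × ℝ → ℝ := fun q =>
          ori (Function.update p w q a) (Function.update p w q b) (Function.update p w q c) *
          ori (Function.update p w q a) (Function.update p w q b) (Function.update p w q d)
          with hF2def
        have hF1 : Continuous F1 :=
          (cont_ori (cont_update p w c) (cont_update p w d) (cont_update p w a)).mul
            (cont_ori (cont_update p w c) (cont_update p w d) (cont_update p w b))
        have hF2 : Continuous F2 :=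
          (cont_ori (cont_update p w a) (cont_update p w b) (cont_update p w c)).mul
            (cont_ori (cont_update p w a) (cont_update p w b) (cont_update p w d))
        have h1n : F1 (p w) < 0 := by
          simpa only [hF1def, Function.update_eq_self] using H1
        have h2n : F2 (p w) < 0 := by
          simpa only [hF2def, Function.update_eq_self] using H2
        have m1 : F1 ⁻¹' Set.Iio 0 ∈ nhds (p w) := hF1.continuousAt (Iio_mem_nhds h1n)
        have m2 : F2 ⁻¹' Set.Iio 0 ∈ nhds (p w) := hF2.continuousAt (Iio_mem_nhds h2n)
        rw [Metric.mem_nhds_iff] at m1 m2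
        obtain ⟨δ1, δ1pos, hball1⟩ := m1
        obtain ⟨δ2, δ2pos, hball2⟩ := m2
        refine ⟨min δ1 δ2, lt_min δ1pos δ2pos, fun q hq => ?_⟩
        have c1 : F1 q < 0 :=
          hball1 (Metric.mem_ball.mpr (lt_of_lt_of_le hq (min_le_left _ _)))
        have c2 : F2 q < 0 :=
          hball2 (Metric.mem_ball.mpr (lt_of_lt_of_le hq (min_le_right _ _)))
        rw [hCP, hCP]
        refine iff_of_true ⟨fun v hv => hcomm v hv.1 hv.2, ?_⟩
          ⟨fun v hv => hcomm v hv.1 hv.2, ⟨q0, hq0ab, hq0cd⟩⟩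
        exact cross_of_ori c1 c2
      · have hdisj0 : Disjoint (segment ℝ (p a) (p b)) (segment ℝ (p c) (p d)) := by
          rw [Set.disjoint_iff_inter_eq_empty]
          exact Set.not_nonempty_iff_eq_empty.mp hcr
        obtain ⟨δ, δpos, hdisj⟩ :=
          hdisj0.exists_thickenings (isCompact_seg _ _) (isCompact_seg _ _).isClosed
        refine ⟨δ, δpos, fun q hq => ?_⟩
        rw [hCP, hCP]
        apply iff_of_false
        · rintro ⟨-, z, hz1, hz2⟩
          have hz1' : z ∈ Metric.thickening δ (segment ℝ (p a) (p b)) :=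
            segment_subset_thickening δpos (lt_of_le_of_lt (hud q a) hq)
              (lt_of_le_of_lt (hud q b) hq) hz1
          have hz2' : z ∈ Metric.thickening δ (segment ℝ (p c) (p d)) :=
            segment_subset_thickening δpos (lt_of_le_of_lt (hud q c) hq)
              (lt_of_le_of_lt (hud q d) hq) hz2
          exact Set.disjoint_left.mp hdisj hz1' hz2'
        · rintro ⟨-, hne⟩
          exact hcr hne
  choose δf hδpos hδ using main
  by_cases hne : Nonempty (G.edgeSet × G.edgeSet)
  · haveI := hne
    haveI : Fintype (G.edgeSet × G.edgeSet) := Fintype.ofFinite _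
    refine ⟨(Finset.univ : Finset (G.edgeSet × G.edgeSet)).inf' Finset.univ_nonempty
      (fun x => δf x.1 x.2), ?_, ?_⟩
    · rw [Finset.lt_inf'_iff]
      exact fun i _ => hδpos i.1 i.2
    · intro q hq _ e f
      exact hδ e f q (lt_of_lt_of_le hq (Finset.inf'_le _ (Finset.mem_univ (e, f))))
  · exact ⟨1, one_pos, fun q _ _ e f => (hne ⟨e, f⟩).elim⟩
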